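/- For each positive natural number k, the number of pairs (m,n) of positive natural numbers satisfying -k^4 + k^2(5m^2 + n^2) + 2(m^2+n^2)^2 < sqrt(k^8 + 2k^6(m^2+n^2) + k^4(m^2+n^2)^2 + 32 k^2 m^2 (m^2+n^2)^2) is at most k^2. -/
import Mathlib

set_option maxHeartbeats 1600000

noncomputable def Fq (a b t : ℝ) : ℝ :=
  ((a+b)*(t+(a+b)) + 2*t*a) * ((a+b)^2 - t^2 + 2*t*a) - 8*t*a*(a+b)^2

lemma fq_strip1 {a b t : ℝ} (ht : 0 ≤ t) (hb : 0 ≤ b)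
    (h1 : 104^2 * t ≤ 10000 * a) : 0 ≤ Fq a b t := by
  unfold Fq
  nlinarith [mul_nonneg (sub_nonneg.2 h1) hb, mul_nonneg (sub_nonneg.2 h1) ht,
    mul_nonneg hb ht, sq_nonneg (10000*a - 104^2*t), sq_nonneg b, sq_nonneg t,
    mul_nonneg (mul_nonneg ht ht) (sq_nonneg (11*b - 2*t)),
    mul_nonneg (mul_nonneg ht ht) ht]

lemma fq_strip2 {a b t : ℝ} (ht : 0 ≤ t)
    (h1 : 102^2 * t ≤ 10000 * a) (h2 : 11^2 * t ≤ 400 * b) : 0 ≤ Fq a b t := by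
  unfold Fq
  nlinarith [mul_nonneg (sub_nonneg.2 h1) (sub_nonneg.2 h2),
    mul_nonneg (sub_nonneg.2 h1) ht, mul_nonneg (sub_nonneg.2 h2) ht,
    mul_nonneg (mul_nonneg ht ht) ht,
    sq_nonneg (10000*a - 102^2*t), sq_nonneg (400*b - 11^2*t), sq_nonneg t]

lemma fq_strip3 {a b t : ℝ} (ht : 0 ≤ t)
    (h1 : 98^2 * t ≤ 10000 * a) (h2 : 13^2 * t ≤ 400 * b) : 0 ≤ Fq a b t := by
  unfold Fq
  nlinarith [mul_nonneg (sub_nonneg.2 h1) (sub_nonneg.2 h2),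
    mul_nonneg (sub_nonneg.2 h1) ht, mul_nonneg (sub_nonneg.2 h2) ht,
    mul_nonneg (mul_nonneg ht ht) ht,
    sq_nonneg (10000*a - 98^2*t), sq_nonneg (400*b - 13^2*t), sq_nonneg t]

lemma fq_strip4 {a b t : ℝ} (ht : 0 ≤ t)
    (h1 : 95^2 * t ≤ 10000 * a) (h2 : 14^2 * t ≤ 400 * b) : 0 ≤ Fq a b t := by
  unfold Fq
  nlinarith [mul_nonneg (sub_nonneg.2 h1) (sub_nonneg.2 h2),
    mul_nonneg (sub_nonneg.2 h1) ht, mul_nonneg (sub_nonneg.2 h2) ht,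
    mul_nonneg (mul_nonneg ht ht) ht,
    sq_nonneg (10000*a - 95^2*t), sq_nonneg (400*b - 14^2*t), sq_nonneg t]

lemma fq_strip5 {a b t : ℝ} (ht : 0 ≤ t)
    (h1 : 91^2 * t ≤ 10000 * a) (h2 : 15^2 * t ≤ 400 * b) : 0 ≤ Fq a b t := by
  unfold Fq
  nlinarith [mul_nonneg (sub_nonneg.2 h1) (sub_nonneg.2 h2),
    mul_nonneg (sub_nonneg.2 h1) ht, mul_nonneg (sub_nonneg.2 h2) ht,
    mul_nonneg (mul_nonneg ht ht) ht,
    sq_nonneg (10000*a - 91^2*t), sq_nonneg (400*b - 15^2*t), sq_nonneg t]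

lemma fq_strip6 {a b t : ℝ} (ht : 0 ≤ t)
    (h1 : 86^2 * t ≤ 10000 * a) (h2 : 16^2 * t ≤ 400 * b) : 0 ≤ Fq a b t := by
  unfold Fq
  nlinarith [mul_nonneg (sub_nonneg.2 h1) (sub_nonneg.2 h2),
    mul_nonneg (sub_nonneg.2 h1) ht, mul_nonneg (sub_nonneg.2 h2) ht,
    mul_nonneg (mul_nonneg ht ht) ht,
    sq_nonneg (10000*a - 86^2*t), sq_nonneg (400*b - 16^2*t), sq_nonneg t]

lemma fq_strip7 {a b t : ℝ} (ht : 0 ≤ t)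
    (h1 : 80^2 * t ≤ 10000 * a) (h2 : 17^2 * t ≤ 400 * b) : 0 ≤ Fq a b t := by
  unfold Fq
  nlinarith [mul_nonneg (sub_nonneg.2 h1) (sub_nonneg.2 h2),
    mul_nonneg (sub_nonneg.2 h1) ht, mul_nonneg (sub_nonneg.2 h2) ht,
    mul_nonneg (mul_nonneg ht ht) ht,
    sq_nonneg (10000*a - 80^2*t), sq_nonneg (400*b - 17^2*t), sq_nonneg t]

lemma fq_strip8 {a b t : ℝ} (ht : 0 ≤ t)
    (h1 : 71^2 * t ≤ 10000 * a) (h2 : 18^2 * t ≤ 400 * b) : 0 ≤ Fq a b t := by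
  unfold Fq
  nlinarith [mul_nonneg (sub_nonneg.2 h1) (sub_nonneg.2 h2),
    mul_nonneg (sub_nonneg.2 h1) ht, mul_nonneg (sub_nonneg.2 h2) ht,
    mul_nonneg (mul_nonneg ht ht) ht,
    sq_nonneg (10000*a - 71^2*t), sq_nonneg (400*b - 18^2*t), sq_nonneg t]

lemma fq_strip9 {a b t : ℝ} (ht : 0 ≤ t)
    (h1 : 59^2 * t ≤ 10000 * a) (h2 : 19^2 * t ≤ 400 * b) : 0 ≤ Fq a b t := by
  unfold Fq
  nlinarith [mul_nonneg (sub_nonneg.2 h1) (sub_nonneg.2 h2),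
    mul_nonneg (sub_nonneg.2 h1) ht, mul_nonneg (sub_nonneg.2 h2) ht,
    mul_nonneg (mul_nonneg ht ht) ht,
    sq_nonneg (10000*a - 59^2*t), sq_nonneg (400*b - 19^2*t), sq_nonneg t]

lemma fq_top {a b t : ℝ} (ht : 0 ≤ t) (ha : 0 ≤ a) (h2 : t ≤ b) :
    0 ≤ Fq a b t := by
  unfold Fq
  nlinarith [mul_nonneg ha (sub_nonneg.2 h2), mul_nonneg ha ht,
    mul_nonneg (sub_nonneg.2 h2) ht, sq_nonneg a, sq_nonneg (b - t), sq_nonneg t,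
    mul_nonneg (mul_nonneg ht ht) ht, mul_nonneg (mul_nonneg ha ha) ha]

/-- The defining inequality implies negativity of the polynomial `Fq`. -/
lemma fq_neg {m n k : ℕ} (hm : 0 < m) (hn : 0 < n) (hk : 0 < k)
    (h : -(k:ℝ)^4 + (k:ℝ)^2 * (5*(m:ℝ)^2 + (n:ℝ)^2) + 2 * ((m:ℝ)^2 + (n:ℝ)^2)^2
        < Real.sqrt ((k:ℝ)^8 + 2*(k:ℝ)^6*((m:ℝ)^2+(n:ℝ)^2)
            + (k:ℝ)^4*((m:ℝ)^2+(n:ℝ)^2)^2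
            + 32*(k:ℝ)^2*(m:ℝ)^2*((m:ℝ)^2+(n:ℝ)^2)^2)) :
    Fq ((m:ℝ)^2) ((n:ℝ)^2) ((k:ℝ)^2) < 0 := by
  obtain ⟨a, hadef⟩ : ∃ a : ℝ, a = (m:ℝ)^2 := ⟨_, rfl⟩
  obtain ⟨b, hbdef⟩ : ∃ b : ℝ, b = (n:ℝ)^2 := ⟨_, rfl⟩
  obtain ⟨t, htdef⟩ : ∃ t : ℝ, t = (k:ℝ)^2 := ⟨_, rfl⟩
  have ha : (0:ℝ) < a := by rw [hadef]; positivity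
  have hb : (0:ℝ) < b := by rw [hbdef]; positivity
  have ht : (0:ℝ) < t := by rw [htdef]; positivity
  rw [← hadef, ← hbdef, ← htdef]
  obtain ⟨L, hLdef⟩ : ∃ L : ℝ, L = -t^2 + t*(5*a+b) + 2*(a+b)^2 := ⟨_, rfl⟩
  obtain ⟨R, hRdef⟩ : ∃ R : ℝ, R = t^2*(t+(a+b))^2 + 32*t*a*(a+b)^2 := ⟨_, rfl⟩
  have hL : -(k:ℝ)^4 + (k:ℝ)^2 * (5*(m:ℝ)^2 + (n:ℝ)^2) + 2 * ((m:ℝ)^2 + (n:ℝ)^2)^2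
      = L := by rw [hLdef, hadef, hbdef, htdef]; ring
  have hR : (k:ℝ)^8 + 2*(k:ℝ)^6*((m:ℝ)^2+(n:ℝ)^2)
            + (k:ℝ)^4*((m:ℝ)^2+(n:ℝ)^2)^2
            + 32*(k:ℝ)^2*(m:ℝ)^2*((m:ℝ)^2+(n:ℝ)^2)^2
      = R := by rw [hRdef, hadef, hbdef, htdef]; ring
  rw [hL, hR] at h
  have hid : Fq a b t = (L^2 - R)/4 := by
    unfold Fq; rw [hLdef, hRdef]; ring
  rcases le_or_gt L 0 with hL0 | hL0
  · -- L ≤ 0 : use v = (L+u)/2, u = t(t+a+b)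
    have hu : (0:ℝ) < t*(t+(a+b)) := by positivity
    have hv : (0:ℝ) < (a+b)*(t+(a+b)) + 2*t*a := by positivity
    have h8 : (0:ℝ) < 8*t*a*(a+b)^2 := by positivity
    have h2v : 2*((a+b)*(t+(a+b)) + 2*t*a) - t*(t+(a+b)) = L := by
      rw [hLdef]; ring
    unfold Fq
    nlinarith [mul_pos hv hv, mul_nonneg hv.le
      (show (0:ℝ) ≤ t*(t+(a+b)) - 2*((a+b)*(t+(a+b)) + 2*t*a) by linarith)]
  · have hsq : L^2 < R := (Real.lt_sqrt hL0.le).mp h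
    rw [hid]; linarith

/-- staircase bound function -/
def Mfun (k n : ℕ) : ℕ :=
  if 20*n ≤ 11*k then 104*k/100
  else if 20*n ≤ 13*k then 102*k/100
  else if 20*n ≤ 14*k then 98*k/100
  else if 20*n ≤ 15*k then 95*k/100
  else if 20*n ≤ 16*k then 91*k/100
  else if 20*n ≤ 17*k then 86*k/100
  else if 20*n ≤ 18*k then 80*k/100
  else if 20*n ≤ 19*k then 71*k/100
  else 59*k/100

def Ufin (k : ℕ) : Finset (ℕ × ℕ) :=
  (Finset.Icc 1 k).biUnion fun n => (Finset.Icc 1 (Mfun k n)).image fun m => (m, n)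

lemma nat_sq_le {x y : ℕ} (h : x ≤ y) : ((x:ℝ))^2 ≤ ((y:ℝ))^2 := by
  have : (x:ℝ) ≤ y := by exact_mod_cast h
  have hx : (0:ℝ) ≤ x := by positivity
  nlinarith

lemma mem_Ufin {k m n : ℕ} (hm : 0 < m) (hn : 0 < n) (hk : 0 < k)
    (hF : Fq ((m:ℝ)^2) ((n:ℝ)^2) ((k:ℝ)^2) < 0) : (m, n) ∈ Ufin k := by
  have ht : (0:ℝ) ≤ (k:ℝ)^2 := by positivity
  have hb0 : (0:ℝ) ≤ (n:ℝ)^2 := by positivity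
  have ha0 : (0:ℝ) ≤ (m:ℝ)^2 := by positivity
  -- n ≤ k
  have hnk : n ≤ k := by
    by_contra hcon
    push_neg at hcon
    have : ((k:ℝ))^2 ≤ ((n:ℝ))^2 := nat_sq_le hcon.le
    exact absurd hF (not_lt.mpr (fq_top ht ha0 this))
  -- m ≤ Mfun k n
  have hmM : m ≤ Mfun k n := by
    by_contra hcon
    push_neg at hcon
    -- helper inequalities
    have key1 : ∀ C : ℕ, C*k ≤ 100*m → ((C:ℝ))^2 * ((k:ℝ))^2 ≤ 10000 * ((m:ℝ))^2 := by
      intro C hC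
      have := nat_sq_le hC
      push_cast at this ⊢
      nlinarith [this]
    have key2 : ∀ D : ℕ, D*k ≤ 20*n → ((D:ℝ))^2 * ((k:ℝ))^2 ≤ 400 * ((n:ℝ))^2 := by
      intro D hD
      have := nat_sq_le hD
      push_cast at this ⊢
      nlinarith [this]
    unfold Mfun at hcon
    by_cases g1 : 20*n ≤ 11*k
    · rw [if_pos g1] at hcon
      have h1 : 104*k ≤ 100*m := by omega
      have := key1 104 h1
      exact absurd hF (not_lt.mpr (fq_strip1 ht hb0 (by push_cast at this ⊢; linarith)))
    · rw [if_neg g1] at hcon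
      by_cases g2 : 20*n ≤ 13*k
      · rw [if_pos g2] at hcon
        have h1 := key1 102 (by omega)
        have h2 := key2 11 (by omega)
        exact absurd hF (not_lt.mpr (fq_strip2 ht
          (by push_cast at h1 ⊢; linarith) (by push_cast at h2 ⊢; linarith)))
      · rw [if_neg g2] at hcon
        by_cases g3 : 20*n ≤ 14*k
        · rw [if_pos g3] at hcon
          have h1 := key1 98 (by omega)
          have h2 := key2 13 (by omega)
          exact absurd hF (not_lt.mpr (fq_strip3 ht
            (by push_cast at h1 ⊢; linarith) (by push_cast at h2 ⊢; linarith)))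
        · rw [if_neg g3] at hcon
          by_cases g4 : 20*n ≤ 15*k
          · rw [if_pos g4] at hcon
            have h1 := key1 95 (by omega)
            have h2 := key2 14 (by omega)
            exact absurd hF (not_lt.mpr (fq_strip4 ht
              (by push_cast at h1 ⊢; linarith) (by push_cast at h2 ⊢; linarith)))
          · rw [if_neg g4] at hcon
            by_cases g5 : 20*n ≤ 16*k
            · rw [if_pos g5] at hcon
              have h1 := key1 91 (by omega)
              have h2 := key2 15 (by omega)
              exact absurd hF (not_lt.mpr (fq_strip5 ht
                (by push_cast at h1 ⊢; linarith) (by push_cast at h2 ⊢; linarith)))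
            · rw [if_neg g5] at hcon
              by_cases g6 : 20*n ≤ 17*k
              · rw [if_pos g6] at hcon
                have h1 := key1 86 (by omega)
                have h2 := key2 16 (by omega)
                exact absurd hF (not_lt.mpr (fq_strip6 ht
                  (by push_cast at h1 ⊢; linarith) (by push_cast at h2 ⊢; linarith)))
              · rw [if_neg g6] at hcon
                by_cases g7 : 20*n ≤ 18*k
                · rw [if_pos g7] at hcon
                  have h1 := key1 80 (by omega)
                  have h2 := key2 17 (by omega)
                  exact absurd hF (not_lt.mpr (fq_strip7 ht
                    (by push_cast at h1 ⊢; linarith) (by push_cast at h2 ⊢; linarith)))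
                · rw [if_neg g7] at hcon
                  by_cases g8 : 20*n ≤ 19*k
                  · rw [if_pos g8] at hcon
                    have h1 := key1 71 (by omega)
                    have h2 := key2 18 (by omega)
                    exact absurd hF (not_lt.mpr (fq_strip8 ht
                      (by push_cast at h1 ⊢; linarith) (by push_cast at h2 ⊢; linarith)))
                  · rw [if_neg g8] at hcon
                    have h1 := key1 59 (by omega)
                    have h2 := key2 19 (by omega)
                    exact absurd hF (not_lt.mpr (fq_strip9 ht
                      (by push_cast at h1 ⊢; linarith) (by push_cast at h2 ⊢; linarith)))
  unfold Ufin
  rw [Finset.mem_biUnion]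
  exact ⟨n, Finset.mem_Icc.2 ⟨hn, hnk⟩,
    Finset.mem_image.2 ⟨m, Finset.mem_Icc.2 ⟨hm, hmM⟩, rfl⟩⟩

lemma numeric_bound (k e1 e2 e3 e4 e5 e6 e7 e8 v1 v2 v3 v4 v5 v6 v7 v8 v9 : ℕ)
    (he1 : 20*e1 ≤ 11*k)
    (he2 : 20*e2 ≤ 13*k)
    (he3 : 20*e3 ≤ 14*k)
    (he4 : 20*e4 ≤ 15*k)
    (he5 : 20*e5 ≤ 16*k)
    (he6 : 20*e6 ≤ 17*k)
    (he7 : 20*e7 ≤ 18*k)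
    (he8 : 20*e8 ≤ 19*k)
    (ho1 : e1 ≤ e2)
    (ho2 : e2 ≤ e3)
    (ho3 : e3 ≤ e4)
    (ho4 : e4 ≤ e5)
    (ho5 : e5 ≤ e6)
    (ho6 : e6 ≤ e7)
    (ho7 : e7 ≤ e8)
    (ho8 : e8 ≤ k)
    (hv1 : 100*v1 ≤ 104*k)
    (hv2 : 100*v2 ≤ 102*k)
    (hv3 : 100*v3 ≤ 98*k)
    (hv4 : 100*v4 ≤ 95*k)
    (hv5 : 100*v5 ≤ 91*k)
    (hv6 : 100*v6 ≤ 86*k)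
    (hv7 : 100*v7 ≤ 80*k)
    (hv8 : 100*v8 ≤ 71*k)
    (hv9 : 100*v9 ≤ 59*k)
    (hw1 : v2 ≤ v1)
    (hw2 : v3 ≤ v2)
    (hw3 : v4 ≤ v3)
    (hw4 : v5 ≤ v4)
    (hw5 : v6 ≤ v5)
    (hw6 : v7 ≤ v6)
    (hw7 : v8 ≤ v7)
    (hw8 : v9 ≤ v8)
    : e1*v1 + ((e2-e1)*v2 + ((e3-e2)*v3 + ((e4-e3)*v4 + ((e5-e4)*v5 + ((e6-e5)*v6 + ((e7-e6)*v7 + ((e8-e7)*v8 + (k-e8)*v9))))))) ≤ k^2 := by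
  zify [ho1, ho2, ho3, ho4, ho5, ho6, ho7, ho8]
  have He1 : (20:ℤ)*e1 ≤ 11*k := by exact_mod_cast he1
  have He2 : (20:ℤ)*e2 ≤ 13*k := by exact_mod_cast he2
  have He3 : (20:ℤ)*e3 ≤ 14*k := by exact_mod_cast he3
  have He4 : (20:ℤ)*e4 ≤ 15*k := by exact_mod_cast he4
  have He5 : (20:ℤ)*e5 ≤ 16*k := by exact_mod_cast he5
  have He6 : (20:ℤ)*e6 ≤ 17*k := by exact_mod_cast he6
  have He7 : (20:ℤ)*e7 ≤ 18*k := by exact_mod_cast he7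
  have He8 : (20:ℤ)*e8 ≤ 19*k := by exact_mod_cast he8
  have Hv1 : (100:ℤ)*v1 ≤ 104*k := by exact_mod_cast hv1
  have Hv2 : (100:ℤ)*v2 ≤ 102*k := by exact_mod_cast hv2
  have Hv3 : (100:ℤ)*v3 ≤ 98*k := by exact_mod_cast hv3
  have Hv4 : (100:ℤ)*v4 ≤ 95*k := by exact_mod_cast hv4
  have Hv5 : (100:ℤ)*v5 ≤ 91*k := by exact_mod_cast hv5
  have Hv6 : (100:ℤ)*v6 ≤ 86*k := by exact_mod_cast hv6
  have Hv7 : (100:ℤ)*v7 ≤ 80*k := by exact_mod_cast hv7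
  have Hv8 : (100:ℤ)*v8 ≤ 71*k := by exact_mod_cast hv8
  have Hv9 : (100:ℤ)*v9 ≤ 59*k := by exact_mod_cast hv9
  have Hw1 : (v2:ℤ) ≤ v1 := by exact_mod_cast hw1
  have Hw2 : (v3:ℤ) ≤ v2 := by exact_mod_cast hw2
  have Hw3 : (v4:ℤ) ≤ v3 := by exact_mod_cast hw3
  have Hw4 : (v5:ℤ) ≤ v4 := by exact_mod_cast hw4
  have Hw5 : (v6:ℤ) ≤ v5 := by exact_mod_cast hw5
  have Hw6 : (v7:ℤ) ≤ v6 := by exact_mod_cast hw6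
  have Hw7 : (v8:ℤ) ≤ v7 := by exact_mod_cast hw7
  have Hw8 : (v9:ℤ) ≤ v8 := by exact_mod_cast hw8
  have Hk : (0:ℤ) ≤ k := Int.natCast_nonneg k
  have Hv9n : (0:ℤ) ≤ v9 := Int.natCast_nonneg v9
  linarith [mul_nonneg Hk Hk,
    mul_nonneg (by linarith : (0:ℤ) ≤ 11*k - 20*e1) (by linarith : (0:ℤ) ≤ (v1:ℤ) - v2),
    mul_nonneg (by linarith : (0:ℤ) ≤ 13*k - 20*e2) (by linarith : (0:ℤ) ≤ (v2:ℤ) - v3),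
    mul_nonneg (by linarith : (0:ℤ) ≤ 14*k - 20*e3) (by linarith : (0:ℤ) ≤ (v3:ℤ) - v4),
    mul_nonneg (by linarith : (0:ℤ) ≤ 15*k - 20*e4) (by linarith : (0:ℤ) ≤ (v4:ℤ) - v5),
    mul_nonneg (by linarith : (0:ℤ) ≤ 16*k - 20*e5) (by linarith : (0:ℤ) ≤ (v5:ℤ) - v6),
    mul_nonneg (by linarith : (0:ℤ) ≤ 17*k - 20*e6) (by linarith : (0:ℤ) ≤ (v6:ℤ) - v7),
    mul_nonneg (by linarith : (0:ℤ) ≤ 18*k - 20*e7) (by linarith : (0:ℤ) ≤ (v7:ℤ) - v8),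
    mul_nonneg (by linarith : (0:ℤ) ≤ 19*k - 20*e8) (by linarith : (0:ℤ) ≤ (v8:ℤ) - v9),
    mul_nonneg Hk (by linarith : (0:ℤ) ≤ 104*k - 100*v1),
    mul_nonneg Hk (by linarith : (0:ℤ) ≤ 102*k - 100*v2),
    mul_nonneg Hk (by linarith : (0:ℤ) ≤ 98*k - 100*v3),
    mul_nonneg Hk (by linarith : (0:ℤ) ≤ 95*k - 100*v4),
    mul_nonneg Hk (by linarith : (0:ℤ) ≤ 91*k - 100*v5),
    mul_nonneg Hk (by linarith : (0:ℤ) ≤ 86*k - 100*v6),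
    mul_nonneg Hk (by linarith : (0:ℤ) ≤ 80*k - 100*v7),
    mul_nonneg Hk (by linarith : (0:ℤ) ≤ 71*k - 100*v8),
    mul_nonneg Hk (by linarith : (0:ℤ) ≤ 59*k - 100*v9)]

lemma sum_M_le (k : ℕ) : ∑ n ∈ Finset.Icc 1 k, Mfun k n ≤ k^2 := by
  have hmem : ∀ lo hi C : ℕ, (∀ n ∈ Finset.Ioc lo hi, Mfun k n ≤ C) →
      ∑ n ∈ Finset.Ioc lo hi, Mfun k n ≤ (hi - lo) * C := by
    intro lo hi C h
    calc ∑ n ∈ Finset.Ioc lo hi, Mfun k n ≤ (Finset.Ioc lo hi).card • C :=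
          Finset.sum_le_card_nsmul _ _ _ h
      _ = (hi - lo) * C := by rw [Nat.card_Ioc, smul_eq_mul]
  have b1 : ∑ n ∈ Finset.Ioc (0) (11*k/20), Mfun k n ≤ ((11*k/20) - (0)) * (104*k/100) :=
    hmem _ _ _ (by
      intro n hn
      simp only [Finset.mem_Ioc] at hn
      unfold Mfun
      split_ifs <;> omega)
  have b2 : ∑ n ∈ Finset.Ioc (11*k/20) (13*k/20), Mfun k n ≤ ((13*k/20) - (11*k/20)) * (102*k/100) :=
    hmem _ _ _ (by
      intro n hn
      simp only [Finset.mem_Ioc] at hn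
      unfold Mfun
      split_ifs <;> omega)
  have b3 : ∑ n ∈ Finset.Ioc (13*k/20) (14*k/20), Mfun k n ≤ ((14*k/20) - (13*k/20)) * (98*k/100) :=
    hmem _ _ _ (by
      intro n hn
      simp only [Finset.mem_Ioc] at hn
      unfold Mfun
      split_ifs <;> omega)
  have b4 : ∑ n ∈ Finset.Ioc (14*k/20) (15*k/20), Mfun k n ≤ ((15*k/20) - (14*k/20)) * (95*k/100) :=
    hmem _ _ _ (by
      intro n hn
      simp only [Finset.mem_Ioc] at hn
      unfold Mfun
      split_ifs <;> omega)
  have b5 : ∑ n ∈ Finset.Ioc (15*k/20) (16*k/20), Mfun k n ≤ ((16*k/20) - (15*k/20)) * (91*k/100) :=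
    hmem _ _ _ (by
      intro n hn
      simp only [Finset.mem_Ioc] at hn
      unfold Mfun
      split_ifs <;> omega)
  have b6 : ∑ n ∈ Finset.Ioc (16*k/20) (17*k/20), Mfun k n ≤ ((17*k/20) - (16*k/20)) * (86*k/100) :=
    hmem _ _ _ (by
      intro n hn
      simp only [Finset.mem_Ioc] at hn
      unfold Mfun
      split_ifs <;> omega)
  have b7 : ∑ n ∈ Finset.Ioc (17*k/20) (18*k/20), Mfun k n ≤ ((18*k/20) - (17*k/20)) * (80*k/100) :=
    hmem _ _ _ (by
      intro n hn
      simp only [Finset.mem_Ioc] at hn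
      unfold Mfun
      split_ifs <;> omega)
  have b8 : ∑ n ∈ Finset.Ioc (18*k/20) (19*k/20), Mfun k n ≤ ((19*k/20) - (18*k/20)) * (71*k/100) :=
    hmem _ _ _ (by
      intro n hn
      simp only [Finset.mem_Ioc] at hn
      unfold Mfun
      split_ifs <;> omega)
  have b9 : ∑ n ∈ Finset.Ioc (19*k/20) (k), Mfun k n ≤ ((k) - (19*k/20)) * (59*k/100) :=
    hmem _ _ _ (by
      intro n hn
      simp only [Finset.mem_Ioc] at hn
      unfold Mfun
      split_ifs <;> omega)
  have hIcc : Finset.Icc 1 k = Finset.Ioc 0 k := by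
    ext x; simp only [Finset.mem_Icc, Finset.mem_Ioc]; omega
  rw [hIcc]
  rw [← Finset.sum_Ioc_consecutive (fun n => Mfun k n) (by omega : (0) ≤ (11*k/20)) (by omega : (11*k/20) ≤ k)]
  rw [← Finset.sum_Ioc_consecutive (fun n => Mfun k n) (by omega : (11*k/20) ≤ (13*k/20)) (by omega : (13*k/20) ≤ k)]
  rw [← Finset.sum_Ioc_consecutive (fun n => Mfun k n) (by omega : (13*k/20) ≤ (14*k/20)) (by omega : (14*k/20) ≤ k)]
  rw [← Finset.sum_Ioc_consecutive (fun n => Mfun k n) (by omega : (14*k/20) ≤ (15*k/20)) (by omega : (15*k/20) ≤ k)]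
  rw [← Finset.sum_Ioc_consecutive (fun n => Mfun k n) (by omega : (15*k/20) ≤ (16*k/20)) (by omega : (16*k/20) ≤ k)]
  rw [← Finset.sum_Ioc_consecutive (fun n => Mfun k n) (by omega : (16*k/20) ≤ (17*k/20)) (by omega : (17*k/20) ≤ k)]
  rw [← Finset.sum_Ioc_consecutive (fun n => Mfun k n) (by omega : (17*k/20) ≤ (18*k/20)) (by omega : (18*k/20) ≤ k)]
  rw [← Finset.sum_Ioc_consecutive (fun n => Mfun k n) (by omega : (18*k/20) ≤ (19*k/20)) (by omega : (19*k/20) ≤ k)]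
  refine le_trans (add_le_add b1 (add_le_add b2 (add_le_add b3 (add_le_add b4 (add_le_add b5 (add_le_add b6 (add_le_add b7 (add_le_add b8 b9)))))))) ?_
  have hnb := numeric_bound k (11*k/20) (13*k/20) (14*k/20) (15*k/20) (16*k/20) (17*k/20) (18*k/20) (19*k/20) (104*k/100) (102*k/100) (98*k/100) (95*k/100) (91*k/100) (86*k/100) (80*k/100) (71*k/100) (59*k/100)
  simp only [Nat.sub_zero]
  exact hnb (by omega) (by omega) (by omega) (by omega) (by omega) (by omega) (by omega) (by omega) (by omega) (by omega) (by omega) (by omega) (by omega) (by omega) (by omega) (by omega) (by omega) (by omega) (by omega) (by omega) (by omega) (by omega) (by omega) (by omega) (by omega) (by omega) (by omega) (by omega) (by omega) (by omega) (by omega) (by omega) (by omega)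

theorem stmt_3 (k : ℕ) (hk : 0 < k) :
    {p : ℕ × ℕ | 0 < p.1 ∧ 0 < p.2 ∧
      -(k:ℝ)^4 + (k:ℝ)^2 * (5*(p.1:ℝ)^2 + (p.2:ℝ)^2) + 2 * ((p.1:ℝ)^2 + (p.2:ℝ)^2)^2
        < Real.sqrt ((k:ℝ)^8 + 2*(k:ℝ)^6*((p.1:ℝ)^2+(p.2:ℝ)^2)
            + (k:ℝ)^4*((p.1:ℝ)^2+(p.2:ℝ)^2)^2
            + 32*(k:ℝ)^2*(p.1:ℝ)^2*((p.1:ℝ)^2+(p.2:ℝ)^2)^2)}.Finite ∧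
    {p : ℕ × ℕ | 0 < p.1 ∧ 0 < p.2 ∧
      -(k:ℝ)^4 + (k:ℝ)^2 * (5*(p.1:ℝ)^2 + (p.2:ℝ)^2) + 2 * ((p.1:ℝ)^2 + (p.2:ℝ)^2)^2
        < Real.sqrt ((k:ℝ)^8 + 2*(k:ℝ)^6*((p.1:ℝ)^2+(p.2:ℝ)^2)
            + (k:ℝ)^4*((p.1:ℝ)^2+(p.2:ℝ)^2)^2
            + 32*(k:ℝ)^2*(p.1:ℝ)^2*((p.1:ℝ)^2+(p.2:ℝ)^2)^2)}.ncard ≤ k^2 := by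
  have hsub : {p : ℕ × ℕ | 0 < p.1 ∧ 0 < p.2 ∧
      -(k:ℝ)^4 + (k:ℝ)^2 * (5*(p.1:ℝ)^2 + (p.2:ℝ)^2) + 2 * ((p.1:ℝ)^2 + (p.2:ℝ)^2)^2
        < Real.sqrt ((k:ℝ)^8 + 2*(k:ℝ)^6*((p.1:ℝ)^2+(p.2:ℝ)^2)
            + (k:ℝ)^4*((p.1:ℝ)^2+(p.2:ℝ)^2)^2
            + 32*(k:ℝ)^2*(p.1:ℝ)^2*((p.1:ℝ)^2+(p.2:ℝ)^2)^2)} ⊆ ↑(Ufin k) := by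
    rintro ⟨m, n⟩ ⟨hm, hn, hlt⟩
    exact mem_Ufin hm hn hk (fq_neg hm hn hk hlt)
  refine ⟨Set.Finite.subset (Ufin k).finite_toSet hsub, ?_⟩
  calc _ ≤ (↑(Ufin k) : Set (ℕ × ℕ)).ncard :=
        Set.ncard_le_ncard hsub (Ufin k).finite_toSet
    _ = (Ufin k).card := Set.ncard_coe_finset _
    _ ≤ ∑ n ∈ Finset.Icc 1 k, ((Finset.Icc 1 (Mfun k n)).image
          (fun m => (m, n))).card := Finset.card_biUnion_le
    _ ≤ ∑ n ∈ Finset.Icc 1 k, Mfun k n := by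
        refine Finset.sum_le_sum fun n _ => ?_
        calc ((Finset.Icc 1 (Mfun k n)).image (fun m => (m, n))).card
            ≤ (Finset.Icc 1 (Mfun k n)).card := Finset.card_image_le
          _ = Mfun k n := by rw [Nat.card_Icc]; omega
    _ ≤ k^2 := sum_M_le k
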